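/- Let $X = (X_1, \dots, X_{2N}) \in \mathbb{R}^{n\times 2N}$ where for each $k$, $\|X_{2k-1}\|_2 = \|X_{2k}\|_2 = 1$, $X_{2k-1}^T X_{2k} = -\hat\rho_k$ with $0 < \hat\rho_k < 1$, and each pair $(X_{2k-1}, X_{2k})$ is orthogonal to all other columns. Set $\hat\varphi_k^2 = 1 - \hat\rho_k$. Then $\min\{2N\|X\beta\|_2^2 : \|\beta\|_1 = 1\} = N/\sum_{k=1}^N (1/\hat\varphi_k^2)$, and this quantity is at least $\min_k \hat\varphi_k^2$, the smallest eigenvalue of $X^TX$. -/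

import Mathlib

open scoped RealInnerProductSpace

lemma stmt10_expand (n N : ℕ) (X : Fin N × Fin 2 → EuclideanSpace ℝ (Fin n))
    (ρ : Fin N → ℝ)
    (hnorm : ∀ j, ‖X j‖ = 1)
    (hρ : ∀ k, ⟪X (k, 0), X (k, 1)⟫ = -ρ k)
    (horth : ∀ k k' i i', k ≠ k' → ⟪X (k, i), X (k', i')⟫ = 0)
    (β : Fin N × Fin 2 → ℝ) :
    ‖∑ j, β j • X j‖ ^ 2
      = ∑ k, ((β (k,0))^2 + (β (k,1))^2 - 2 * ρ k * (β (k,0) * β (k,1))) := by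
  have h1 : ‖∑ j, β j • X j‖ ^ 2 = ⟪∑ j, β j • X j, ∑ j, β j • X j⟫ := by
    rw [real_inner_self_eq_norm_sq]
  rw [h1, sum_inner]
  simp only [inner_sum, real_inner_smul_left, real_inner_smul_right]
  rw [Fintype.sum_prod_type]
  refine Finset.sum_congr rfl fun k _ => ?_
  have hsingle : ∀ i : Fin 2, ∑ j' : Fin N × Fin 2, β j' * (β (k, i) * ⟪X (k, i), X j'⟫)
      = β (k,0) * (β (k,i) * ⟪X (k,i), X (k,0)⟫) + β (k,1) * (β (k,i) * ⟪X (k,i), X (k,1)⟫) := by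
    intro i
    rw [Fintype.sum_prod_type]
    rw [Finset.sum_eq_single k]
    · simp [Fin.sum_univ_two]
    · intro k' _ hk'
      simp [horth k k' i _ (Ne.symm hk')]
    · simp
  rw [Fin.sum_univ_two, hsingle 0, hsingle 1]
  have h00 : ⟪X (k, (0:Fin 2)), X (k, 0)⟫ = 1 := by
    rw [real_inner_self_eq_norm_sq, hnorm]; norm_num
  have h11 : ⟪X (k, (1:Fin 2)), X (k, 1)⟫ = 1 := by
    rw [real_inner_self_eq_norm_sq, hnorm]; norm_num
  have h10 : ⟪X (k, (1:Fin 2)), X (k, 0)⟫ = -ρ k := by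
    rw [real_inner_comm]; exact hρ k
  rw [h00, h11, h10, hρ k]
  ring

lemma stmt10_blockineq (a b r : ℝ) (h0 : 0 < r) (h1 : r < 1) :
    (1-r)/2 * (|a|+|b|)^2 ≤ a^2+b^2-2*r*(a*b) := by
  nlinarith [sq_nonneg (|a|-|b|), sq_abs a, sq_abs b, abs_nonneg a,
    abs_nonneg b, abs_mul a b, le_abs_self (a*b)]

lemma stmt10_cs (N : ℕ) (c s : Fin N → ℝ) (hc : ∀ k, 0 < c k)
    (hsum : ∑ k, s k = 1) : 1/(∑ k, (c k)⁻¹) ≤ ∑ k, c k * (s k)^2 := by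
  have hne : (Finset.univ : Finset (Fin N)).Nonempty := by
    by_contra h
    rw [Finset.not_nonempty_iff_eq_empty] at h
    rw [h] at hsum; simp at hsum
  have hT : 0 < ∑ k, (c k)⁻¹ :=
    Finset.sum_pos (fun k _ => inv_pos.mpr (hc k)) hne
  rw [div_le_iff₀ hT]
  have key := Finset.sum_mul_sq_le_sq_mul_sq Finset.univ
    (fun k => Real.sqrt (c k) * s k) (fun k => (Real.sqrt (c k))⁻¹)
  have h1 : ∀ k : Fin N, Real.sqrt (c k) * s k * (Real.sqrt (c k))⁻¹ = s k := by
    intro k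
    have : Real.sqrt (c k) ≠ 0 := ne_of_gt (Real.sqrt_pos.mpr (hc k))
    field_simp
  have h2 : ∀ k : Fin N, (Real.sqrt (c k) * s k)^2 = c k * (s k)^2 := by
    intro k
    rw [mul_pow, Real.sq_sqrt (hc k).le]
  have h3 : ∀ k : Fin N, ((Real.sqrt (c k))⁻¹)^2 = (c k)⁻¹ := by
    intro k
    rw [← Real.sqrt_inv, Real.sq_sqrt (inv_pos.mpr (hc k)).le]
  simp only [h1, h2, h3, hsum] at key
  linarith

/-- compatibility constant for the block-orthogonal design of N pairs. -/
theorem stmt10 (n N : ℕ) (hN : 0 < N) (X : Fin N × Fin 2 → EuclideanSpace ℝ (Fin n))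
    (ρ : Fin N → ℝ)
    (hnorm : ∀ j, ‖X j‖ = 1)
    (hρ : ∀ k, ⟪X (k, 0), X (k, 1)⟫ = -ρ k)
    (hρ01 : ∀ k, 0 < ρ k ∧ ρ k < 1)
    (horth : ∀ k k' i i', k ≠ k' → ⟪X (k, i), X (k', i')⟫ = 0) :
    IsLeast {t : ℝ | ∃ β : Fin N × Fin 2 → ℝ, (∑ j, |β j|) = 1 ∧
        t = (2 * N : ℝ) * ‖∑ j, β j • X j‖ ^ 2}
      ((N : ℝ) / ∑ k, (1 - ρ k)⁻¹) ∧
    Finset.univ.inf' ⟨⟨0, hN⟩, Finset.mem_univ _⟩ (fun k => 1 - ρ k)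
      ≤ (N : ℝ) / ∑ k, (1 - ρ k)⁻¹ := by
  have hφ : ∀ k, 0 < 1 - ρ k := fun k => by linarith [(hρ01 k).2]
  set T : ℝ := ∑ k, (1 - ρ k)⁻¹ with hTdef
  have hne : (Finset.univ : Finset (Fin N)).Nonempty := ⟨⟨0, hN⟩, Finset.mem_univ _⟩
  have hT : 0 < T := Finset.sum_pos (fun k _ => inv_pos.mpr (hφ k)) hne
  have hNpos : (0:ℝ) < N := Nat.cast_pos.mpr hN
  constructor
  · constructor
    · -- membership: the optimal β
      refine ⟨fun j => (1 - ρ j.1)⁻¹ / (2 * T), ?_, ?_⟩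
      · rw [Fintype.sum_prod_type]
        have : ∀ k : Fin N, ∑ i : Fin 2, |(1 - ρ k)⁻¹ / (2 * T)| = 2 * ((1 - ρ k)⁻¹ / (2 * T)) := by
          intro k
          rw [Fin.sum_univ_two, abs_of_nonneg (div_nonneg (inv_nonneg.mpr (hφ k).le) (by linarith))]
          ring
        rw [Finset.sum_congr rfl fun k _ => this k]
        rw [← Finset.mul_sum, ← Finset.sum_div, ← hTdef]
        field_simp
      · rw [stmt10_expand n N X ρ hnorm hρ horth]
        have hterm : ∀ k : Fin N,
            ((1 - ρ k)⁻¹ / (2 * T))^2 + ((1 - ρ k)⁻¹ / (2 * T))^2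
              - 2 * ρ k * ((1 - ρ k)⁻¹ / (2 * T) * ((1 - ρ k)⁻¹ / (2 * T)))
            = (1 - ρ k)⁻¹ * (2 * T^2)⁻¹ := by
          intro k
          have h := (hφ k).ne'
          field_simp
          ring
        rw [Finset.sum_congr rfl fun k _ => hterm k, ← Finset.sum_mul, ← hTdef]
        field_simp
    · -- lower bound
      rintro t ⟨β, hβ, rfl⟩
      rw [stmt10_expand n N X ρ hnorm hρ horth]
      set s : Fin N → ℝ := fun k => |β (k,0)| + |β (k,1)| with hsdef
      have hssum : ∑ k, s k = 1 := by
        rw [← hβ, Fintype.sum_prod_type]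
        exact Finset.sum_congr rfl fun k _ => by simp [hsdef, Fin.sum_univ_two]
      have step1 : ∑ k, (1 - ρ k)/2 * (s k)^2
          ≤ ∑ k, ((β (k,0))^2 + (β (k,1))^2 - 2 * ρ k * (β (k,0) * β (k,1))) :=
        Finset.sum_le_sum fun k _ =>
          stmt10_blockineq (β (k,0)) (β (k,1)) (ρ k) (hρ01 k).1 (hρ01 k).2
      have step2 : 1/(2*T) ≤ ∑ k, (1 - ρ k)/2 * (s k)^2 := by
        have := stmt10_cs N (fun k => (1 - ρ k)/2) s (fun k => div_pos (hφ k) two_pos) hssum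
        have hinv : ∑ k, ((1 - ρ k)/2)⁻¹ = 2 * T := by
          rw [hTdef, Finset.mul_sum]
          refine Finset.sum_congr rfl fun k _ => ?_
          rw [inv_div, div_eq_mul_inv]
        rw [hinv] at this
        exact this
      have hQ : 1/(2*T) ≤ ∑ k, ((β (k,0))^2 + (β (k,1))^2 - 2 * ρ k * (β (k,0) * β (k,1))) :=
        le_trans step2 step1
      calc (N:ℝ)/T = 2 * N * (1/(2*T)) := by field_simp
        _ ≤ 2 * N * ∑ k, ((β (k,0))^2 + (β (k,1))^2 - 2 * ρ k * (β (k,0) * β (k,1))) := by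
            apply mul_le_mul_of_nonneg_left hQ; positivity
  · -- min eigenvalue ≤ compatibility constant
    set m := Finset.univ.inf' hne (fun k => 1 - ρ k) with hmdef
    have hmle : ∀ k, m ≤ 1 - ρ k := fun k => Finset.inf'_le _ (Finset.mem_univ k)
    have hmpos : 0 < m := by
      rw [hmdef, Finset.lt_inf'_iff]
      exact fun k _ => hφ k
    rw [le_div_iff₀ hT]
    have hTle : T ≤ N * m⁻¹ := by
      calc T ≤ ∑ _k : Fin N, m⁻¹ :=
            Finset.sum_le_sum fun k _ => inv_anti₀ hmpos (hmle k)
        _ = N * m⁻¹ := by simp [mul_comm]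
      
    calc m * T ≤ m * (N * m⁻¹) := mul_le_mul_of_nonneg_left hTle hmpos.le
      _ = N := by field_simp
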